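/- Let H be a complex inner product space and q ∈ ℝ. If ξ, η ∈ H satisfy ⟨ξ, η⟩ = ⟨η, ξ⟩ (equivalently, ⟨ξ, η⟩ is real), then the left field operator s_ξ = c_ξ + a_ξ and the right field operator d_η = r_η + r*_η commute on the algebraic Fock space F(H): s_ξ ∘ d_η = d_η ∘ s_ξ. -/

import Mathlib

set_option linter.unusedSectionVars false

noncomputable section

variable {H : Type*} [NormedAddCommGroup H] [InnerProductSpace ℂ H]

/-- The simple tensor `ζ 0 ⊗ ⋯ ⊗ ζ (n-1)` in the algebraic Fock space
`F(H) = ⨁ₙ H^{⊗n}`, realized as the tensor algebra (for `n = 0` this is the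
vacuum vector `Ω = 1`). -/
def st (n : ℕ) (ζ : Fin n → H) : TensorAlgebra ℂ H :=
  (List.ofFn fun i => TensorAlgebra.ι ℂ (ζ i)).prod

/-- Remove the `i`-th entry from a tuple. -/
def removeNth {α : Type*} : {n : ℕ} → Fin n → (Fin n → α) → Fin (n - 1) → α
  | 0, i, _ => i.elim0
  | _ + 1, i, ζ => fun j => ζ (i.succAbove j)

/-- `c` is the family of (left) `q`-creation operators. -/
def IsCreation (c : H → Module.End ℂ (TensorAlgebra ℂ H)) : Prop :=
  ∀ (ξ : H) (n : ℕ) (ζ : Fin n → H), c ξ (st n ζ) = st (n + 1) (Fin.cons ξ ζ)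

/-- `a` is the family of (left) `q`-annihilation operators. -/
def IsAnnihilation (q : ℝ) (a : H → Module.End ℂ (TensorAlgebra ℂ H)) : Prop :=
  ∀ (ξ : H) (n : ℕ) (ζ : Fin n → H),
    a ξ (st n ζ) =
      ∑ i : Fin n, ((q : ℂ) ^ (i : ℕ) * (inner ℂ ξ (ζ i) : ℂ)) • st (n - 1) (removeNth i ζ)

/-- `r` is the family of right `q`-creation operators:
`r_ξ Ω = ξ` and `r_ξ (ζ₁⊗⋯⊗ζₙ) = ζ₁⊗⋯⊗ζₙ⊗ξ`. -/
def IsRightCreation (r : H → Module.End ℂ (TensorAlgebra ℂ H)) : Prop :=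
  ∀ (ξ : H) (n : ℕ) (ζ : Fin n → H), r ξ (st n ζ) = st (n + 1) (Fin.snoc ζ ξ)

/-- `rs` is the family of right `q`-annihilation operators:
`r*_ξ Ω = 0` and `r*_ξ (ζ₁⊗⋯⊗ζₙ) = Σᵢ q^(n-i) ⟨ξ, ζᵢ⟩ ζ₁⊗⋯⊗ζ̂ᵢ⊗⋯⊗ζₙ`. -/
def IsRightAnnihilation (q : ℝ) (rs : H → Module.End ℂ (TensorAlgebra ℂ H)) : Prop :=
  ∀ (ξ : H) (n : ℕ) (ζ : Fin n → H),
    rs ξ (st n ζ) =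
      ∑ i : Fin n,
        ((q : ℂ) ^ (n - 1 - (i : ℕ)) * (inner ℂ ξ (ζ i) : ℂ)) • st (n - 1) (removeNth i ζ)

/- ### Auxiliary lemmas -/

lemma sa_val {n : ℕ} (i : Fin (n+1)) (j : Fin n) :
    ((i.succAbove j : Fin (n+1)) : ℕ) = if (j:ℕ) < (i:ℕ) then (j:ℕ) else (j:ℕ)+1 := by
  rcases lt_or_ge (Fin.castSucc j) i with h | h
  · rw [Fin.succAbove_of_castSucc_lt _ _ h, if_pos (by simpa [Fin.lt_def] using h),
      Fin.coe_castSucc]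
  · rw [Fin.succAbove_of_le_castSucc _ _ h, if_neg (by simp [Fin.le_def] at h; omega),
      Fin.val_succ]

lemma pa_val {n : ℕ} (j : Fin n) (i : Fin (n+1)) :
    ((j.predAbove i : Fin n) : ℕ) = if (j:ℕ) < (i:ℕ) then (i:ℕ) - 1 else (i:ℕ) := by
  unfold Fin.predAbove
  split
  · next h => rw [if_pos (by simpa [Fin.lt_def] using h), Fin.coe_pred]
  · next h => rw [if_neg (by simp [Fin.lt_def] at h; omega), Fin.coe_castPred]

lemma K1 {n : ℕ} (i : Fin (n+1)) (j : Fin n) :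
    (i.succAbove j).succAbove (j.predAbove i) = i := by
  have hi := i.isLt; have hj := j.isLt
  apply Fin.ext
  simp only [sa_val, pa_val]
  split_ifs <;> omega

lemma K4 {n : ℕ} (i : Fin (n+1)) (j : Fin n) :
    (j.predAbove i).predAbove (i.succAbove j) = j := by
  have hi := i.isLt; have hj := j.isLt
  apply Fin.ext
  simp only [sa_val, pa_val]
  split_ifs <;> omega

lemma K3 {n : ℕ} (i : Fin (n+2)) (j : Fin (n+1)) (k : Fin n) :
    (i.succAbove j).succAbove ((j.predAbove i).succAbove k) = i.succAbove (j.succAbove k) := by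
  have hi := i.isLt; have hj := j.isLt; have hk := k.isLt
  apply Fin.ext
  simp only [sa_val, pa_val]
  split_ifs <;> omega

lemma removeNth_apply {α : Type*} {m : ℕ} (i : Fin (m+1)) (ζ : Fin (m+1) → α) (k : Fin m) :
    removeNth i ζ k = ζ (i.succAbove k) := rfl

@[simp] lemma rn2 {m : ℕ} (j : Fin (m+1)) (ξ : H) (ζ : Fin (m+1) → H) :
    removeNth (Fin.succ j) (Fin.cons ξ ζ) = Fin.cons ξ (removeNth j ζ) := by
  funext k
  induction k using Fin.cases with
  | zero => simp [removeNth_apply]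
  | succ k' => simp [removeNth_apply, Fin.succ_succAbove_succ]

@[simp] lemma rn3 {m : ℕ} (ξ : H) (ζ : Fin (m+1) → H) :
    removeNth (0 : Fin (m+2)) (Fin.cons ξ ζ) = ζ := by
  funext k; simp [removeNth_apply]

@[simp] lemma rn4 {m : ℕ} (η : H) (ζ : Fin (m+1) → H) :
    removeNth (Fin.last (m+1)) (Fin.snoc ζ η) = ζ := by
  funext k; simp [removeNth_apply, Fin.succAbove_last]

@[simp] lemma rn5 {m : ℕ} (j : Fin (m+1)) (η : H) (ζ : Fin (m+1) → H) :
    removeNth (Fin.castSucc j) (Fin.snoc ζ η) = Fin.snoc (removeNth j ζ) η := by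
  funext k
  induction k using Fin.lastCases with
  | last =>
      have h : (Fin.castSucc j).succAbove (Fin.last m) = Fin.last (m+1) := by
        rw [Fin.succAbove_of_le_castSucc]
        · simp [Fin.succ_last]
        · simp [Fin.le_def]; omega
      simp [removeNth_apply, h]
  | cast k' => simp [removeNth_apply, Fin.castSucc_succAbove_castSucc]

lemma st_mul (n k : ℕ) (ζ : Fin n → H) (ζ' : Fin k → H) :
    st n ζ * st k ζ' = st (n + k) (Fin.append ζ ζ') := by
  unfold st
  rw [← List.prod_append, ← List.ofFn_fin_append]
  apply congrArg
  apply congrArg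
  funext i
  induction i using Fin.addCases with
  | left i => simp [Fin.append_left]
  | right i => simp [Fin.append_right]

lemma span_st :
    Submodule.span ℂ {x : TensorAlgebra ℂ H | ∃ n ζ, st n ζ = x} = ⊤ := by
  rw [eq_top_iff]
  rintro x -
  have hmul : Submodule.span ℂ {x : TensorAlgebra ℂ H | ∃ n ζ, st n ζ = x} *
      Submodule.span ℂ {x : TensorAlgebra ℂ H | ∃ n ζ, st n ζ = x} ≤
      Submodule.span ℂ {x : TensorAlgebra ℂ H | ∃ n ζ, st n ζ = x} := by
    rw [Submodule.span_mul_span]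
    apply Submodule.span_le.mpr
    rintro x ⟨a, ⟨n, ζ, rfl⟩, b, ⟨k, ζ', rfl⟩, rfl⟩
    exact Submodule.subset_span ⟨n + k, Fin.append ζ ζ', (st_mul n k ζ ζ').symm⟩
  induction x using TensorAlgebra.induction with
  | algebraMap r =>
      have h1 : (algebraMap ℂ (TensorAlgebra ℂ H)) r = r • st 0 (fun i => i.elim0) := by
        simp [st, Algebra.algebraMap_eq_smul_one]
      rw [h1]
      exact Submodule.smul_mem _ _ (Submodule.subset_span ⟨0, _, rfl⟩)
  | ι x =>
      exact Submodule.subset_span ⟨1, fun _ => x, by simp [st]⟩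
  | mul a b ha hb => exact hmul (Submodule.mul_mem_mul ha hb)
  | add a b ha hb => exact add_mem ha hb

lemma pow_helper (q : ℝ) (x y : ℂ) (e f : ℕ) :
    (q:ℂ)^e * x * ((q:ℂ)^f * y) = (q:ℂ)^(e+f) * (x*y) := by
  rw [pow_add]; ring

lemma E2 (q : ℝ) (ξ η : H) (m : ℕ) (ζ : Fin (m+1) → H) :
    ∑ i : Fin (m+1), ((q:ℂ)^(m-(i:ℕ)) * (inner ℂ η (ζ i) : ℂ)) •
      ∑ j : Fin m, ((q:ℂ)^(j:ℕ) * (inner ℂ ξ (removeNth i ζ j) : ℂ)) •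
        st (m-1) (removeNth j (removeNth i ζ))
  = ∑ i : Fin (m+1), ((q:ℂ)^(i:ℕ) * (inner ℂ ξ (ζ i) : ℂ)) •
      ∑ j : Fin m, ((q:ℂ)^(m-1-(j:ℕ)) * (inner ℂ η (removeNth i ζ j) : ℂ)) •
        st (m-1) (removeNth j (removeNth i ζ)) := by
  rcases m with _ | m₀
  · simp
  · simp only [Finset.smul_sum, smul_smul, Nat.add_sub_cancel]
    rw [← Finset.sum_product', ← Finset.sum_product']
    refine Finset.sum_nbij' (fun p => (p.1.succAbove p.2, p.2.predAbove p.1))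
      (fun p => (p.1.succAbove p.2, p.2.predAbove p.1)) (by simp) (by simp)
      (fun p _ => Prod.ext (K1 p.1 p.2) (K4 p.1 p.2))
      (fun p _ => Prod.ext (K1 p.1 p.2) (K4 p.1 p.2))
      (fun p _ => ?_)
    obtain ⟨i, j⟩ := p
    have hrm : removeNth (j.predAbove i) (removeNth (i.succAbove j) ζ)
        = removeNth j (removeNth i ζ) := by
      funext k
      simp only [removeNth_apply]
      rw [K3]
    have hζ : removeNth (i.succAbove j) ζ (j.predAbove i) = ζ i := by
      rw [removeNth_apply, K1]
    simp only [hrm, hζ, removeNth_apply]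
    rw [pow_helper, pow_helper]
    have expo : (m₀+1-(i:ℕ)) + (j:ℕ)
        = ((i.succAbove j : Fin (m₀+2)):ℕ) + (m₀ - ((j.predAbove i : Fin (m₀+1)):ℕ)) := by
      have hi := i.isLt; have hj := j.isLt
      simp only [sa_val, pa_val]
      split_ifs <;> omega
    rw [expo, mul_comm (inner ℂ η (ζ i) : ℂ)]

/-- If `⟨ξ, η⟩ = ⟨η, ξ⟩` then the left field operator `s_ξ = c_ξ + a_ξ` commutes with the
right field operator `d_η = r_η + r*_η`. -/
theorem stmt6 (q : ℝ) (c a r rs : H → Module.End ℂ (TensorAlgebra ℂ H))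
    (hc : IsCreation c) (ha : IsAnnihilation q a)
    (hr : IsRightCreation r) (hrs : IsRightAnnihilation q rs)
    (ξ η : H) (hreal : (inner ℂ ξ η : ℂ) = (inner ℂ η ξ : ℂ)) :
    (c ξ + a ξ) * (r η + rs η) = (r η + rs η) * (c ξ + a ξ) := by
  apply LinearMap.ext_on (span_st (H := H))
  rintro x ⟨n, ζ, rfl⟩
  simp only [Module.End.mul_apply, LinearMap.add_apply, map_add]
  rcases n with _ | m
  · -- vacuum case
    rw [hr η 0 ζ, hrs η 0 ζ, hc ξ 0 ζ, ha ξ 0 ζ]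
    simp only [Finset.univ_eq_empty, Finset.sum_empty, map_zero, add_zero, zero_add]
    rw [hc ξ 1 (Fin.snoc ζ η), ha ξ 1 (Fin.snoc ζ η), hr η 1 (Fin.cons ξ ζ),
      hrs η 1 (Fin.cons ξ ζ)]
    have h0 : removeNth (0 : Fin 1) (Fin.snoc ζ η) = removeNth (0 : Fin 1) (Fin.cons ξ ζ) :=
      funext fun k => k.elim0
    have hs : (Fin.snoc ζ η : Fin 1 → H) 0 = η := by
      have : (0 : Fin 1) = Fin.last 0 := rfl
      rw [this, Fin.snoc_last]
    simp only [Fin.sum_univ_one, Fin.val_zero, pow_zero, one_mul, hs, Fin.cons_zero,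
      Nat.sub_zero, Nat.sub_self]
    rw [Fin.cons_snoc_eq_snoc_cons, hreal, h0]
  · have h1 : c ξ (r η (st (m+1) ζ)) = st (m+3) (Fin.cons ξ (Fin.snoc ζ η)) := by
      rw [hr η (m+1) ζ, hc ξ (m+2) (Fin.snoc ζ η)]
    have h5 : r η (c ξ (st (m+1) ζ)) = st (m+3) (Fin.snoc (Fin.cons ξ ζ) η) := by
      rw [hc ξ (m+1) ζ, hr η (m+2) (Fin.cons ξ ζ)]
    have h2 : a ξ (r η (st (m+1) ζ)) =
        (∑ j : Fin (m+1), ((q:ℂ)^(j:ℕ) * (inner ℂ ξ (ζ j) : ℂ)) •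
          st (m+1) (Fin.snoc (removeNth j ζ) η))
        + ((q:ℂ)^(m+1) * (inner ℂ ξ η : ℂ)) • st (m+1) ζ := by
      rw [hr η (m+1) ζ, ha ξ (m+2) (Fin.snoc ζ η), Fin.sum_univ_castSucc]
      simp only [Fin.coe_castSucc, Fin.snoc_castSucc, Fin.snoc_last, Fin.val_last,
        rn4, rn5]
      rfl
    have h6 : rs η (c ξ (st (m+1) ζ)) =
        ((q:ℂ)^(m+1) * (inner ℂ η ξ : ℂ)) • st (m+1) ζ
        + ∑ j : Fin (m+1), ((q:ℂ)^(m-(j:ℕ)) * (inner ℂ η (ζ j) : ℂ)) •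
          st (m+1) (Fin.cons ξ (removeNth j ζ)) := by
      rw [hc ξ (m+1) ζ, hrs η (m+2) (Fin.cons ξ ζ), Fin.sum_univ_succ]
      simp only [Fin.cons_zero, Fin.cons_succ, Fin.val_succ, Fin.val_zero, rn2, rn3,
        Nat.sub_zero, Nat.succ_sub_succ]
      rfl
    have h3 : c ξ (rs η (st (m+1) ζ)) =
        ∑ j : Fin (m+1), ((q:ℂ)^(m-(j:ℕ)) * (inner ℂ η (ζ j) : ℂ)) •
          st (m+1) (Fin.cons ξ (removeNth j ζ)) := by
      rw [hrs η (m+1) ζ, map_sum]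
      simp only [map_smul]
      refine Finset.sum_congr rfl fun i _ => ?_
      rw [hc ξ (m+1-1) (removeNth i ζ)]
      rfl
    have h7 : r η (a ξ (st (m+1) ζ)) =
        ∑ j : Fin (m+1), ((q:ℂ)^(j:ℕ) * (inner ℂ ξ (ζ j) : ℂ)) •
          st (m+1) (Fin.snoc (removeNth j ζ) η) := by
      rw [ha ξ (m+1) ζ, map_sum]
      simp only [map_smul]
      refine Finset.sum_congr rfl fun j _ => ?_
      rw [hr η (m+1-1) (removeNth j ζ)]
      rfl
    have h4 : a ξ (rs η (st (m+1) ζ)) =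
        ∑ i : Fin (m+1), ((q:ℂ)^(m-(i:ℕ)) * (inner ℂ η (ζ i) : ℂ)) •
          ∑ j : Fin m, ((q:ℂ)^(j:ℕ) * (inner ℂ ξ (removeNth i ζ j) : ℂ)) •
            st (m-1) (removeNth j (removeNth i ζ)) := by
      rw [hrs η (m+1) ζ, map_sum]
      simp only [map_smul]
      refine Finset.sum_congr rfl fun i _ => ?_
      rw [ha ξ (m+1-1) (removeNth i ζ)]
      rfl
    have h8 : rs η (a ξ (st (m+1) ζ)) =
        ∑ i : Fin (m+1), ((q:ℂ)^(i:ℕ) * (inner ℂ ξ (ζ i) : ℂ)) •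
          ∑ j : Fin m, ((q:ℂ)^(m-1-(j:ℕ)) * (inner ℂ η (removeNth i ζ j) : ℂ)) •
            st (m-1) (removeNth j (removeNth i ζ)) := by
      rw [ha ξ (m+1) ζ, map_sum]
      simp only [map_smul]
      refine Finset.sum_congr rfl fun i _ => ?_
      rw [hrs η (m+1-1) (removeNth i ζ)]
      rfl
    rw [h1, h2, h3, h4, h5, h6, h7, h8, E2 q ξ η m ζ, hreal, Fin.cons_snoc_eq_snoc_cons]
    abel
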